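/- There exists exactly one real number t0 in the open interval I = (θ, −13) with s(t0) = 2; this t0 satisfies u12(t0) = 0, where u12(x) = 45678110765558881 + 6234622186059196x − 4142454922929870x^2 − 804497641938708x^3 + 33981103268895x^4 + 15022950168312x^5 + 496259775228x^6 − 87343156680x^7 − 6119479377x^8 − 32085428x^9 + 16838386x^10 + 1138140x^11 + 3249x^12, and −13.031 < t0 < −13.030. -/

import Mathlib

noncomputable section

def ω (t : ℝ) : ℝ := Real.sqrt (3 * (506 + 75 * t - t ^ 3))

def q5 (t : ℝ) : ℝ := (t - 11) ^ 2 * (13 + t) ^ 5 * (-1763 + 75 * t + 111 * t ^ 2 + t ^ 3)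

def ps1 (t : ℝ) : ℝ :=
  -430297163879 - 140961934838 * t - 23363774235 * t ^ 2 - 3595306632 * t ^ 3 -
    594107646 * t ^ 4 - 113195268 * t ^ 5 - 1046526 * t ^ 6 + 1347960 * t ^ 7 +
    171621 * t ^ 8 - 10742 * t ^ 9 + 25 * t ^ 10

def ps2 (t : ℝ) : ℝ :=
  -96 * (-94197721 - 28304354 * t - 6941146 * t ^ 2 - 1190186 * t ^ 3 - 19228 * t ^ 4 +
    154 * t ^ 5 - 310 * t ^ 6 - 398 * t ^ 7 + 5 * t ^ 8)

def s (t : ℝ) : ℝ := (1 / 7) * Real.sqrt ((ps1 t + ps2 t * ω t) / q5 t)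

def u12 (x : ℝ) : ℝ :=
  45678110765558881 + 6234622186059196 * x - 4142454922929870 * x ^ 2 -
    804497641938708 * x ^ 3 + 33981103268895 * x ^ 4 + 15022950168312 * x ^ 5 +
    496259775228 * x ^ 6 - 87343156680 * x ^ 7 - 6119479377 * x ^ 8 -
    32085428 * x ^ 9 + 16838386 * x ^ 10 + 1138140 * x ^ 11 + 3249 * x ^ 12

/-- the cofactor polynomial -/
def V8 (t : ℝ) : ℝ :=
  4984951257 + 868588344 * t - 322287732 * t ^ 2 - 79476696 * t ^ 3 - 3328794 * t ^ 4 +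
    432072 * t ^ 5 + 45612 * t ^ 6 + 1368 * t ^ 7 + 9 * t ^ 8

lemma interval_param {t : ℝ} (h1 : -28 < t) (h2 : t < -13) :
    ∃ x : ℝ, 0 < x ∧ x < 15 ∧ t = -13 - x :=
  ⟨-13 - t, by linarith, by linarith, by ring⟩

lemma cubic_pos {t : ℝ} (h1 : -28 < t) (h2 : t < -13) :
    0 < -1763 + 75 * t + 111 * t ^ 2 + t ^ 3 := by
  obtain ⟨x, hx0, hx15, rfl⟩ := interval_param h1 h2
  nlinarith [pow_pos hx0 2, pow_pos hx0 3, mul_pos (mul_pos hx0 hx0) hx0,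
    mul_nonneg (mul_nonneg hx0.le hx0.le) (by linarith : (0:ℝ) ≤ 15 - x)]

lemma g_pos {t : ℝ} (h1 : -28 < t) (h2 : t < -13) :
    0 < 506 + 75 * t - t ^ 3 := by
  obtain ⟨x, hx0, hx15, rfl⟩ := interval_param h1 h2
  nlinarith [pow_pos hx0 2, pow_pos hx0 3]

lemma ps2_neg {t : ℝ} (h1 : -28 < t) (h2 : t < -13) : ps2 t < 0 := by
  obtain ⟨x, hx0, hx15, rfl⟩ := interval_param h1 h2
  unfold ps2
  nlinarith [pow_pos hx0 2, pow_pos hx0 3, pow_pos hx0 4, pow_pos hx0 5, pow_pos hx0 6,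
    pow_pos hx0 7, pow_pos hx0 8]

lemma q5_neg {t : ℝ} (h1 : -28 < t) (h2 : t < -13) : q5 t < 0 := by
  have hc := cubic_pos h1 h2
  have h13 : (13 + t) < 0 := by linarith
  have h5 : (13 + t) ^ 5 < 0 := Odd.pow_neg (by decide) h13
  have hsq : 0 < (t - 11) ^ 2 := pow_pos (by linarith : (0:ℝ) < -(t - 11)) 2 |>.trans_le
    (le_of_eq (by ring))
  unfold q5
  have : (t - 11) ^ 2 * (13 + t) ^ 5 < 0 := mul_neg_of_pos_of_neg hsq h5
  exact mul_neg_of_neg_of_pos this hc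

lemma A_neg {t : ℝ} (h1 : -28 < t) (h2 : t < -13) : 196 * q5 t - ps1 t < 0 := by
  obtain ⟨x, hx0, hx15, rfl⟩ := interval_param h1 h2
  unfold q5 ps1
  have h10 : x ^ 10 ≤ 15 * x ^ 9 := by
    nlinarith [mul_nonneg (pow_pos hx0 9).le (by linarith : (0:ℝ) ≤ 15 - x)]
  nlinarith [pow_pos hx0 2, pow_pos hx0 3, pow_pos hx0 4, pow_pos hx0 5, pow_pos hx0 6,
    pow_pos hx0 7, pow_pos hx0 8, pow_pos hx0 9, pow_pos hx0 10, h10]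

lemma V8_neg {t : ℝ} (h1 : -28 < t) (h2 : t < -13) : V8 t < 0 := by
  obtain ⟨x, hx0, hx15, rfl⟩ := interval_param h1 h2
  unfold V8
  have h8 : x ^ 8 ≤ 15 * x ^ 7 := by
    nlinarith [mul_nonneg (pow_pos hx0 7).le (by linarith : (0:ℝ) ≤ 15 - x)]
  nlinarith [pow_pos hx0 4, pow_pos hx0 5, pow_pos hx0 6, pow_pos hx0 7, pow_pos hx0 8, h8]

lemma key_ident (t : ℝ) :
    (196 * q5 t - ps1 t) ^ 2 - 3 * (506 + 75 * t - t ^ 3) * (ps2 t) ^ 2 = u12 t * V8 t := by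
  unfold q5 ps1 ps2 u12 V8
  ring

/-- On (-28,-13), s t = 2 iff u12 t = 0. -/
lemma key_iff {t : ℝ} (h1 : -28 < t) (h2 : t < -13) : s t = 2 ↔ u12 t = 0 := by
  have hG : 0 < 506 + 75 * t - t ^ 3 := g_pos h1 h2
  have hG3 : (0:ℝ) ≤ 3 * (506 + 75 * t - t ^ 3) := by linarith
  have hω : 0 < ω t := Real.sqrt_pos.mpr (by linarith)
  have hω2 : ω t ^ 2 = 3 * (506 + 75 * t - t ^ 3) := Real.sq_sqrt hG3
  have hps2 : ps2 t < 0 := ps2_neg h1 h2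
  have hq5 : q5 t < 0 := q5_neg h1 h2
  have hq5ne : q5 t ≠ 0 := ne_of_lt hq5
  have hA : 196 * q5 t - ps1 t < 0 := A_neg h1 h2
  have hV : V8 t < 0 := V8_neg h1 h2
  have hPω : ps2 t * ω t < 0 := mul_neg_of_neg_of_pos hps2 hω
  constructor
  · intro hs
    unfold s at hs
    have hsq : Real.sqrt ((ps1 t + ps2 t * ω t) / q5 t) = 14 := by linarith
    have hR0 : (0:ℝ) ≤ (ps1 t + ps2 t * ω t) / q5 t := by
      by_contra hcon
      push_neg at hcon
      rw [Real.sqrt_eq_zero'.mpr (le_of_lt hcon)] at hsq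
      norm_num at hsq
    have hR : (ps1 t + ps2 t * ω t) / q5 t = 196 := by
      have := Real.sq_sqrt hR0
      rw [hsq] at this
      nlinarith
    have heq : ps1 t + ps2 t * ω t = 196 * q5 t := by
      field_simp at hR
      linarith
    have hsq2 : (196 * q5 t - ps1 t) ^ 2 = 3 * (506 + 75 * t - t ^ 3) * (ps2 t) ^ 2 := by
      have h' : ps2 t * ω t = 196 * q5 t - ps1 t := by linarith
      calc (196 * q5 t - ps1 t) ^ 2 = (ps2 t * ω t) ^ 2 := by rw [h']
        _ = (ps2 t) ^ 2 * ω t ^ 2 := by ring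
        _ = 3 * (506 + 75 * t - t ^ 3) * (ps2 t) ^ 2 := by rw [hω2]; ring
    have hprod : u12 t * V8 t = 0 := by rw [← key_ident t]; linarith
    rcases mul_eq_zero.mp hprod with h | h
    · exact h
    · exact absurd h (ne_of_lt hV)
  · intro hu
    have hprod : (196 * q5 t - ps1 t) ^ 2 - 3 * (506 + 75 * t - t ^ 3) * (ps2 t) ^ 2 = 0 := by
      rw [key_ident t, hu, zero_mul]
    have hsq2 : (196 * q5 t - ps1 t) ^ 2 = (ps2 t * ω t) ^ 2 := by
      have : (ps2 t * ω t) ^ 2 = (ps2 t) ^ 2 * ω t ^ 2 := by ring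
      rw [this, hω2]
      linarith
    have heq : ps2 t * ω t = 196 * q5 t - ps1 t := by
      have hfac : (196 * q5 t - ps1 t - ps2 t * ω t) * (196 * q5 t - ps1 t + ps2 t * ω t) = 0 := by
        nlinarith [hsq2]
      rcases mul_eq_zero.mp hfac with h | h
      · linarith
      · exfalso; nlinarith
    unfold s
    have hR : (ps1 t + ps2 t * ω t) / q5 t = 196 := by
      rw [div_eq_iff hq5ne]
      linarith
    rw [hR, show (196:ℝ) = 14 ^ 2 by norm_num, Real.sqrt_sq (by norm_num : (0:ℝ) ≤ 14)]
    norm_num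

lemma hasDeriv_u12 (x : ℝ) : HasDerivAt u12
    (6234622186059196 - 8284909845859740 * x - 2413492925816124 * x ^ 2 +
      135924413075580 * x ^ 3 + 75114750841560 * x ^ 4 + 2977558651368 * x ^ 5 -
      611402096760 * x ^ 6 - 48955835016 * x ^ 7 - 288768852 * x ^ 8 +
      168383860 * x ^ 9 + 12519540 * x ^ 10 + 38988 * x ^ 11) x := by
  have h : u12 = fun y : ℝ =>
      (45678110765558881:ℝ) + (6234622186059196:ℝ) * y ^ 1 + (-4142454922929870:ℝ) * y ^ 2 +
      (-804497641938708:ℝ) * y ^ 3 + (33981103268895:ℝ) * y ^ 4 + (15022950168312:ℝ) * y ^ 5 +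
      (496259775228:ℝ) * y ^ 6 + (-87343156680:ℝ) * y ^ 7 + (-6119479377:ℝ) * y ^ 8 +
      (-32085428:ℝ) * y ^ 9 + (16838386:ℝ) * y ^ 10 + (1138140:ℝ) * y ^ 11 +
      (3249:ℝ) * y ^ 12 := by
    funext y; unfold u12; ring
  rw [h]
  have H := ((((((((((((hasDerivAt_const x (45678110765558881:ℝ)).add
    ((hasDerivAt_pow 1 x).const_mul (6234622186059196:ℝ))).add
    ((hasDerivAt_pow 2 x).const_mul (-4142454922929870:ℝ))).add
    ((hasDerivAt_pow 3 x).const_mul (-804497641938708:ℝ))).add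
    ((hasDerivAt_pow 4 x).const_mul (33981103268895:ℝ))).add
    ((hasDerivAt_pow 5 x).const_mul (15022950168312:ℝ))).add
    ((hasDerivAt_pow 6 x).const_mul (496259775228:ℝ))).add
    ((hasDerivAt_pow 7 x).const_mul (-87343156680:ℝ))).add
    ((hasDerivAt_pow 8 x).const_mul (-6119479377:ℝ))).add
    ((hasDerivAt_pow 9 x).const_mul (-32085428:ℝ))).add
    ((hasDerivAt_pow 10 x).const_mul (16838386:ℝ))).add
    ((hasDerivAt_pow 11 x).const_mul (1138140:ℝ))).add
    ((hasDerivAt_pow 12 x).const_mul (3249:ℝ))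
  refine H.congr_deriv ?_
  push_cast
  ring

lemma du12_pos {t : ℝ} (h1 : -28 < t) (h2 : t < -13) :
    0 < 6234622186059196 - 8284909845859740 * t - 2413492925816124 * t ^ 2 +
      135924413075580 * t ^ 3 + 75114750841560 * t ^ 4 + 2977558651368 * t ^ 5 -
      611402096760 * t ^ 6 - 48955835016 * t ^ 7 - 288768852 * t ^ 8 +
      168383860 * t ^ 9 + 12519540 * t ^ 10 + 38988 * t ^ 11 := by
  obtain ⟨x, hx0, hx15, rfl⟩ := interval_param h1 h2
  have h11 : x ^ 11 ≤ 15 * x ^ 10 := by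
    nlinarith [mul_nonneg (pow_pos hx0 10).le (by linarith : (0:ℝ) ≤ 15 - x)]
  nlinarith [pow_pos hx0 2, pow_pos hx0 3, pow_pos hx0 4, pow_pos hx0 5, pow_pos hx0 6,
    pow_pos hx0 7, pow_pos hx0 8, pow_pos hx0 9, pow_pos hx0 10, pow_pos hx0 11, h11]

lemma u12_strictMono : StrictMonoOn u12 (Set.Icc (-28 : ℝ) (-13 : ℝ)) := by
  have hdiff : Differentiable ℝ u12 := fun x => (hasDeriv_u12 x).differentiableAt
  apply strictMonoOn_of_deriv_pos (convex_Icc _ _) hdiff.continuous.continuousOn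
  intro x hx
  rw [interior_Icc] at hx
  rw [(hasDeriv_u12 x).deriv]
  exact du12_pos hx.1 hx.2

lemma theta_gt {θ : ℝ} (hθroot : θ ^ 3 + 27 * θ ^ 2 - 93 * θ - 1847 = 0) : -28 < θ := by
  by_contra h
  push_neg at h
  nlinarith [sq_nonneg θ, sq_nonneg (θ + 28)]

lemma theta_lt {θ : ℝ}
    (hθmin : ∀ x : ℝ, x ^ 3 + 27 * x ^ 2 - 93 * x - 1847 = 0 → θ ≤ x) : θ ≤ -27 := by
  have hcont : ContinuousOn (fun x : ℝ => x ^ 3 + 27 * x ^ 2 - 93 * x - 1847)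
      (Set.Icc (-28) (-27)) := by fun_prop
  have hmem : (0:ℝ) ∈ Set.Icc ((fun x : ℝ => x ^ 3 + 27 * x ^ 2 - 93 * x - 1847) (-28))
      ((fun x : ℝ => x ^ 3 + 27 * x ^ 2 - 93 * x - 1847) (-27)) := by
    norm_num
  have := intermediate_value_Icc (by norm_num : (-28:ℝ) ≤ -27) hcont hmem
  obtain ⟨r, hr, hr0⟩ := this
  exact le_trans (hθmin r hr0) hr.2

lemma u12_neg_left : u12 (-13.031) < 0 := by
  unfold u12; norm_num

lemma u12_pos_right : (0:ℝ) < u12 (-13.030) := by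
  unfold u12; norm_num

lemma exists_root : ∃ t0 : ℝ, t0 ∈ Set.Ioo (-13.031 : ℝ) (-13.030 : ℝ) ∧ u12 t0 = 0 := by
  have hcont : ContinuousOn u12 (Set.Icc (-13.031 : ℝ) (-13.030 : ℝ)) :=
    (Differentiable.continuous fun x => (hasDeriv_u12 x).differentiableAt).continuousOn
  have hmem : (0:ℝ) ∈ Set.Ioo (u12 (-13.031)) (u12 (-13.030)) :=
    ⟨u12_neg_left, u12_pos_right⟩
  have := intermediate_value_Ioo (by norm_num : (-13.031:ℝ) ≤ -13.030) hcont hmem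
  obtain ⟨t0, ht0, ht0v⟩ := this
  exact ⟨t0, ht0, ht0v⟩

/-- there is exactly one t₀ ∈ I = (θ, −13) with s(t₀) = 2; this t₀ satisfies
u₁₂(t₀) = 0 and −13.031 < t₀ < −13.030. -/
theorem stmt6 (θ : ℝ)
    (hθroot : θ ^ 3 + 27 * θ ^ 2 - 93 * θ - 1847 = 0)
    (hθmin : ∀ x : ℝ, x ^ 3 + 27 * x ^ 2 - 93 * x - 1847 = 0 → θ ≤ x) :
    (∃! t0 : ℝ, t0 ∈ Set.Ioo θ (-13 : ℝ) ∧ s t0 = 2) ∧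
    (∀ t0 : ℝ, t0 ∈ Set.Ioo θ (-13 : ℝ) → s t0 = 2 →
      u12 t0 = 0 ∧ -13.031 < t0 ∧ t0 < -13.030) := by
  have hθ28 : -28 < θ := theta_gt hθroot
  have hθ27 : θ ≤ -27 := theta_lt hθmin
  obtain ⟨t0, ht0mem, ht0root⟩ := exists_root
  have ht0l : (-13.031:ℝ) < t0 := ht0mem.1
  have ht0r : t0 < (-13.030:ℝ) := ht0mem.2
  have ht0I : t0 ∈ Set.Ioo θ (-13 : ℝ) := by
    constructor
    · have : (-13.031:ℝ) > -27 := by norm_num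
      linarith
    · have : (-13.030:ℝ) < -13 := by norm_num
      linarith
  have ht0Icc : t0 ∈ Set.Icc (-28:ℝ) (-13:ℝ) := by
    constructor <;> [linarith [ht0I.1]; linarith [ht0I.2]]
  have ht0s : s t0 = 2 := (key_iff (by linarith [ht0I.1]) ht0I.2).mpr ht0root
  -- any solution lies in (-13.031, -13.030)
  have hbound : ∀ t : ℝ, t ∈ Set.Ioo θ (-13 : ℝ) → s t = 2 →
      u12 t = 0 ∧ -13.031 < t ∧ t < -13.030 := by
    intro t htI hts
    have ht28 : -28 < t := by linarith [htI.1]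
    have ht13 : t < -13 := htI.2
    have htu : u12 t = 0 := (key_iff ht28 ht13).mp hts
    have htIcc : t ∈ Set.Icc (-28:ℝ) (-13:ℝ) := ⟨by linarith, by linarith⟩
    refine ⟨htu, ?_, ?_⟩
    · by_contra h
      push_neg at h
      have hmemL : (-13.031:ℝ) ∈ Set.Icc (-28:ℝ) (-13:ℝ) := by norm_num
      have := u12_strictMono.monotoneOn htIcc hmemL h
      rw [htu] at this
      linarith [u12_neg_left]
    · by_contra h
      push_neg at h
      have hmemR : (-13.030:ℝ) ∈ Set.Icc (-28:ℝ) (-13:ℝ) := by norm_num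
      have := u12_strictMono.monotoneOn hmemR htIcc h
      rw [htu] at this
      linarith [u12_pos_right]
  refine ⟨⟨t0, ⟨ht0I, ht0s⟩, ?_⟩, hbound⟩
  intro t' ⟨ht'I, ht's⟩
  obtain ⟨ht'u, ht'l, ht'r⟩ := hbound t' ht'I ht's
  have ht'Icc : t' ∈ Set.Icc (-28:ℝ) (-13:ℝ) := ⟨by linarith [ht'I.1], by linarith [ht'I.2]⟩
  exact u12_strictMono.injOn ht'Icc ht0Icc (by rw [ht'u, ht0root])
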